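/- arXiv:2306.16128 — 2 statements merged into one kernel-verified Lean document; each statement's English description precedes it below -/
import Mathlib

section
/- Σ_{n=1}^{N} tan²(nπ/(2N+1)) = N(2N+1) for every natural number N ≥ 1. -/
open Real Finset

namespace AuxTan

lemma geo (M : ℕ) (hM : M ≠ 0) (j : ℕ) :
    ∑ n ∈ range M, Complex.exp (2*π*Complex.I/M) ^ (j*n) = if M ∣ j then (M:ℂ) else 0 := by
  set ω := Complex.exp (2*π*Complex.I/M) with hω
  have hprim : IsPrimitiveRoot ω M := Complex.isPrimitiveRoot_exp M hM
  have hx : ∀ n : ℕ, ω ^ (j*n) = (ω^j)^n := fun n => pow_mul ω j n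
  simp only [hx]
  by_cases h : M ∣ j
  · have h1 : ω ^ j = 1 := (hprim.pow_eq_one_iff_dvd j).2 h
    simp [h1, h]
  · have h1 : ω ^ j ≠ 1 := fun c => h ((hprim.pow_eq_one_iff_dvd j).1 c)
    have h2 : (ω ^ j) ^ M = 1 := by
      rw [← pow_mul, mul_comm, pow_mul, hprim.pow_eq_one, one_pow]
    have := geom_sum_mul (ω ^ j) M
    rw [h2, sub_self] at this
    have h3 : ω ^ j - 1 ≠ 0 := sub_ne_zero.2 h1
    simp [h, (mul_eq_zero.1 this).resolve_right h3]

end AuxTan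

namespace AuxTan

lemma zne (M : ℕ) (hM : Odd M) {z : ℂ} (hz : z ^ M = 1) : z + 1 ≠ 0 := by
  intro h
  have hz1 : z = -1 := by linear_combination h
  rw [hz1, hM.neg_pow, one_pow] at hz
  exact (by norm_num : (-1:ℂ) ≠ 1) hz

lemma inv_rep (M : ℕ) (hM : Odd M) {z : ℂ} (hz : z ^ M = 1) :
    (z + 1) * ∑ k ∈ range M, (-z) ^ k = 2 := by
  have := geom_sum_mul (-z) M
  rw [hM.neg_pow, hz] at this
  linear_combination -this

lemma one_div_rep (M : ℕ) (hM : Odd M) {z : ℂ} (hz : z ^ M = 1) :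
    1 / (z + 1) = (1/2) * ∑ k ∈ range M, (-z) ^ k := by
  have h0 := zne M hM hz
  rw [div_eq_iff h0]
  linear_combination (-1/2) * inv_rep M hM hz

end AuxTan

namespace AuxTan

lemma single0 (M : ℕ) (hM0 : M ≠ 0) :
    ∑ l ∈ range M, (-1:ℂ)^l * (if M ∣ l then (M:ℂ) else 0) = M := by
  rw [Finset.sum_eq_single 0]
  · simp
  · intro l hl hl0
    have : ¬ M ∣ l := fun h => hl0 (Nat.eq_zero_of_dvd_of_lt h (mem_range.1 hl))
    rw [if_neg this, mul_zero]
  · intro h; exact absurd (mem_range.2 (Nat.pos_of_ne_zero hM0)) h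

lemma inner (M : ℕ) (hM : Odd M) (k : ℕ) (hk : k < M) :
    ∑ l ∈ range M, (-1:ℂ)^(k+l) * (if M ∣ (k+l) then (M:ℂ) else 0)
      = if k = 0 then (M:ℂ) else -M := by
  have hM0 : M ≠ 0 := by omega
  by_cases hk0 : k = 0
  · simp only [hk0, zero_add, if_pos rfl]
    exact single0 M hM0
  · rw [if_neg hk0, Finset.sum_eq_single (M - k)]
    · have h1 : k + (M - k) = M := Nat.add_sub_cancel' hk.le
      rw [h1, if_pos dvd_rfl, hM.neg_one_pow]
      ring
    · intro l hl hlne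
      have hlM := mem_range.1 hl
      have : ¬ M ∣ (k + l) := by
        intro hd
        have h2 : k + l = M := Nat.eq_of_dvd_of_lt_two_mul (by omega) hd (by omega)
        exact hlne (by omega)
      rw [if_neg this, mul_zero]
    · intro h
      exact absurd (mem_range.2 (by omega)) h

end AuxTan

namespace AuxTan

lemma zpow (M : ℕ) (hM0 : M ≠ 0) (n : ℕ) : (Complex.exp (2*π*Complex.I/M) ^ n) ^ M = 1 := by
  rw [← pow_mul, ← Complex.exp_nat_mul]
  have hMc : (M:ℂ) ≠ 0 := Nat.cast_ne_zero.2 hM0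
  have h : ((n*M : ℕ) : ℂ) * (2*π*Complex.I/M) = (n:ℂ) * (2*π*Complex.I) := by
    push_cast; field_simp
  rw [h, Complex.exp_nat_mul_two_pi_mul_I]

lemma B1 (M : ℕ) (hM : Odd M) (hM0 : M ≠ 0) :
    ∑ n ∈ range M, 1 / (Complex.exp (2*π*Complex.I/M) ^ n + 1) = M / 2 := by
  set ω := Complex.exp (2*π*Complex.I/M) with hω
  calc ∑ n ∈ range M, 1 / (ω ^ n + 1)
      = ∑ n ∈ range M, (1/2) * ∑ k ∈ range M, (-(ω^n)) ^ k :=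
        Finset.sum_congr rfl fun n _ => one_div_rep M hM (zpow M hM0 n)
    _ = (1/2) * ∑ k ∈ range M, (-1:ℂ)^k * ∑ n ∈ range M, ω ^ (k*n) := by
        rw [← Finset.mul_sum, Finset.sum_comm]
        congr 1
        refine Finset.sum_congr rfl fun k _ => ?_
        rw [Finset.mul_sum]
        refine Finset.sum_congr rfl fun n _ => ?_
        rw [neg_pow, ← pow_mul, mul_comm n k]
    _ = (1/2) * ∑ k ∈ range M, (-1:ℂ)^k * (if M ∣ k then (M:ℂ) else 0) := by
        congr 1
        exact Finset.sum_congr rfl fun k _ => by rw [geo M hM0 k]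
    _ = (1/2) * M := by rw [single0 M hM0]
    _ = M / 2 := by ring

lemma B2 (M : ℕ) (hM : Odd M) (hM0 : M ≠ 0) :
    ∑ n ∈ range M, (1 / (Complex.exp (2*π*Complex.I/M) ^ n + 1) : ℂ)^2
      = M * (2 - M) / 4 := by
  set ω := Complex.exp (2*π*Complex.I/M) with hω
  calc ∑ n ∈ range M, (1 / (ω ^ n + 1) : ℂ)^2
      = ∑ n ∈ range M, (1/4) * ∑ k ∈ range M, ∑ l ∈ range M,
          (-1:ℂ)^(k+l) * ω ^ ((k+l)*n) := by
        refine Finset.sum_congr rfl fun n _ => ?_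
        rw [one_div_rep M hM (zpow M hM0 n), mul_pow,
          show ((1:ℂ)/2)^2 = 1/4 by norm_num, sq, Finset.sum_mul_sum]
        congr 1
        refine Finset.sum_congr rfl fun k _ => Finset.sum_congr rfl fun l _ => ?_
        rw [show (-(ω^n)) = (-1) * ω^n by ring, mul_pow, mul_pow,
          ← pow_mul, ← pow_mul, mul_comm n k, mul_comm n l,
          add_mul, pow_add, pow_add]
        ring
    _ = (1/4) * ∑ k ∈ range M, ∑ l ∈ range M,
          (-1:ℂ)^(k+l) * ∑ n ∈ range M, ω ^ ((k+l)*n) := by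
        rw [← Finset.mul_sum]
        congr 1
        rw [Finset.sum_comm]
        refine Finset.sum_congr rfl fun k _ => ?_
        rw [Finset.sum_comm]
        refine Finset.sum_congr rfl fun l _ => ?_
        rw [Finset.mul_sum]
    _ = (1/4) * ∑ k ∈ range M, (if k = 0 then (M:ℂ) else -M) := by
        congr 1
        refine Finset.sum_congr rfl fun k hk => ?_
        rw [← inner M hM k (mem_range.1 hk)]
        exact Finset.sum_congr rfl fun l _ => by rw [geo M hM0 (k+l)]
    _ = (1/4) * ((M:ℕ) • (-(M:ℂ)) + 2*M) := by
        congr 1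
        calc ∑ k ∈ range M, (if k = 0 then (M:ℂ) else -M)
            = ∑ k ∈ range M, ((-(M:ℂ)) + (if k = 0 then 2*(M:ℂ) else 0)) :=
              Finset.sum_congr rfl fun k _ => by split <;> ring
          _ = (M:ℕ) • (-(M:ℂ)) + 2*M := by
              rw [Finset.sum_add_distrib, Finset.sum_const, card_range,
                Finset.sum_ite_eq' (range M) 0 (fun _ => 2*(M:ℂ)),
                if_pos (mem_range.2 (Nat.pos_of_ne_zero hM0))]
    _ = M * (2 - M) / 4 := by
        rw [nsmul_eq_mul]; ring

end AuxTan

namespace AuxTan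

lemma D (M : ℕ) (hM : Odd M) (hM0 : M ≠ 0) :
    ∑ n ∈ range M, (-(Complex.exp (2*π*Complex.I/M) ^ n - 1)^2
        / (Complex.exp (2*π*Complex.I/M) ^ n + 1)^2)
      = (M:ℂ)^2 - M := by
  set ω := Complex.exp (2*π*Complex.I/M) with hω
  have key : ∀ n ∈ range M, -(ω^n - 1)^2/(ω^n+1)^2
      = -1 + 4*(1/(ω^n+1)) - 4*(1/(ω^n+1):ℂ)^2 := by
    intro n _
    have h : ω^n + 1 ≠ 0 := zne M hM (zpow M hM0 n)
    field_simp
    ring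
  rw [Finset.sum_congr rfl key]
  rw [Finset.sum_sub_distrib, Finset.sum_add_distrib, Finset.sum_const, card_range,
    ← Finset.mul_sum, ← Finset.mul_sum, B1 M hM hM0, B2 M hM hM0, nsmul_eq_mul]
  ring

lemma E (M : ℕ) (hM : Odd M) (hM0 : M ≠ 0) (n : ℕ) :
    ((Real.tan (n*π/M) : ℝ) : ℂ)^2
      = -(Complex.exp (2*π*Complex.I/M)^n - 1)^2
          /(Complex.exp (2*π*Complex.I/M)^n + 1)^2 := by
  set ω := Complex.exp (2*π*Complex.I/M) with hω
  set θ : ℝ := n*π/M with hθ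
  set E : ℂ := Complex.exp ((θ:ℝ) * Complex.I) with hE
  have hMc : (M:ℂ) ≠ 0 := Nat.cast_ne_zero.2 hM0
  have he2 : E ^ 2 = ω^n := by
    rw [hE, hω, sq, ← Complex.exp_add, ← Complex.exp_nat_mul]
    congr 1
    rw [hθ]
    push_cast
    field_simp
    ring
  have hz1 : ω^n + 1 ≠ 0 := zne M hM (zpow M hM0 n)
  have hE21 : E^2 + 1 ≠ 0 := by rw [he2]; exact hz1
  have he0 : E ≠ 0 := Complex.exp_ne_zero _
  have hcos : Complex.cos θ ≠ 0 := by
    intro h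
    rw [Complex.cos, neg_mul, Complex.exp_neg, ← hE, div_eq_zero_iff] at h
    have h2 : E + E⁻¹ = 0 := h.resolve_right two_ne_zero
    apply hE21
    field_simp at h2
    linear_combination h2
  have hsum : E + E⁻¹ ≠ 0 := by
    intro h
    apply hE21
    field_simp at h
    linear_combination h
  rw [Complex.ofReal_tan, Complex.tan_eq_sin_div_cos, div_pow, Complex.sin, Complex.cos,
    neg_mul, Complex.exp_neg, ← hE, ← he2]
  have hI := Complex.I_sq
  rw [div_eq_div_iff (pow_ne_zero 2 (div_ne_zero hsum two_ne_zero))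
    (pow_ne_zero 2 hE21)]
  field_simp
  linear_combination (E^4 - 2*E^2 + 1) * hI

end AuxTan

open AuxTan in
theorem stmt_7 (N : ℕ) (hN : 1 ≤ N) :
    ∑ n ∈ Finset.Icc 1 N, Real.tan (n * π / (2 * N + 1)) ^ 2
      = N * (2 * N + 1) := by
  set M : ℕ := 2*N+1 with hMdef
  have hM : Odd M := ⟨N, by omega⟩
  have hM0 : M ≠ 0 := by omega
  have hMR : ((M:ℝ)) = 2*(N:ℝ)+1 := by rw [hMdef]; push_cast; ring
  set g : ℕ → ℝ := fun n => Real.tan (n*π/M)^2 with hg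
  -- total sum over range M
  have hT : ∑ n ∈ range M, g n = (M:ℝ)^2 - M := by
    have hC : ((∑ n ∈ range M, g n : ℝ) : ℂ) = (M:ℂ)^2 - M := by
      rw [Complex.ofReal_sum]
      calc ∑ n ∈ range M, ((g n : ℝ) : ℂ)
          = ∑ n ∈ range M, (-(Complex.exp (2*π*Complex.I/M)^n - 1)^2
              /(Complex.exp (2*π*Complex.I/M)^n + 1)^2) := by
            refine Finset.sum_congr rfl fun n _ => ?_
            simp only [hg]
            rw [Complex.ofReal_pow]
            exact E M hM hM0 n
        _ = (M:ℂ)^2 - M := D M hM hM0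
    exact_mod_cast hC
  -- drop n = 0
  have h0 : g 0 = 0 := by simp [hg]
  have e1 : Finset.Icc 1 (2*N) = Finset.Ioc 0 (2*N) := rfl
  have e2 : Finset.Icc 1 N = Finset.Ioc 0 N := rfl
  have hsplit : ∑ n ∈ range M, g n = ∑ n ∈ Finset.Icc 1 (2*N), g n := by
    have hrange : range M = Finset.Icc 0 (2*N) := by
      ext x
      simp only [Finset.mem_range, Finset.mem_Icc]
      omega
    rw [hrange, Finset.Icc_eq_cons_Ioc (Nat.zero_le _), Finset.sum_cons, h0,
      zero_add, e1]
  -- reflection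
  have hrefl : ∀ j ∈ Finset.Ioc N (2*N), g j = g (M - j) := by
    intro j hj
    rw [Finset.mem_Ioc] at hj
    have hcast : ((M - j : ℕ) : ℝ) = (M:ℝ) - j := by
      rw [Nat.cast_sub (by omega)]
    have hMne : (M:ℝ) ≠ 0 := by rw [hMR]; positivity
    have harg : ((M - j : ℕ):ℝ)*π/M = π - (j:ℝ)*π/M := by
      rw [hcast]; field_simp
    simp only [hg]
    rw [harg, Real.tan_pi_sub]
    ring
  have hdouble : ∑ n ∈ Finset.Icc 1 (2*N), g n = 2 * ∑ n ∈ Finset.Icc 1 N, g n := by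
    rw [e1, e2, ← Finset.sum_Ioc_consecutive g (Nat.zero_le N) (by omega)]
    have e3 : ∑ n ∈ Finset.Ioc N (2*N), g n = ∑ n ∈ Finset.Ioc 0 N, g n := by
      refine Finset.sum_nbij' (fun j => M - j) (fun j => M - j) ?_ ?_ ?_ ?_ ?_
      · intro a ha; simp only [Finset.mem_Ioc] at *; omega
      · intro a ha; simp only [Finset.mem_Ioc] at *; omega
      · intro a ha; simp only [Finset.mem_Ioc] at ha; show M - (M - a) = a; omega
      · intro a ha; simp only [Finset.mem_Ioc] at ha; show M - (M - a) = a; omega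
      · intro a ha; exact hrefl a ha
    rw [e3]; ring
  -- finish
  have hfinal : 2 * ∑ n ∈ Finset.Icc 1 N, g n = (M:ℝ)^2 - M := by
    rw [← hdouble, ← hsplit, hT]
  have hsum_eq : ∑ n ∈ Finset.Icc 1 N, Real.tan (n * π / (2 * N + 1)) ^ 2
      = ∑ n ∈ Finset.Icc 1 N, g n := by
    refine Finset.sum_congr rfl fun n _ => ?_
    simp only [hg]
    rw [hMR]
  rw [hsum_eq]
  rw [hMR] at hfinal
  linear_combination hfinal / 2
end

section
/- Let A(X) = √(1+X) and f_M its Padé-type approximant f_M(X) = 1 + (2/M) Σ_{n=1}^N c_n X/(1+c_n+X) with M = 2N+1, c_n = tan²(nπ/M). Then for every fixed X ≥ 0, f_M(X) ≤ √(1+X); i.e., the approximant underestimates the square root on [0,∞). -/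
open Real Finset

private lemma zsum13 {M : ℕ} {ζ : ℂ} (hζ : IsPrimitiveRoot ζ M) {k : ℕ} (hk : k < M) :
    ∑ n ∈ range M, (ζ ^ k) ^ n = if k = 0 then (M : ℂ) else 0 := by
  split_ifs with h
  · simp [h]
  · have h1 : ζ ^ k ≠ 1 := hζ.pow_ne_one_of_pos_of_lt h hk
    rw [geom_sum_eq h1]
    have h2 : (ζ ^ k) ^ M = 1 := by
      rw [← pow_mul, mul_comm, pow_mul, hζ.pow_eq_one, one_pow]
    simp [h2]

private lemma sumA13 {M : ℕ} {ζ : ℂ} (hζ : IsPrimitiveRoot ζ M) {x : ℂ}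
    (hx : ∀ n : ℕ, 1 + x * ζ ^ n ≠ 0) (hD : (1 : ℂ) - (-x) ^ M ≠ 0) :
    ∑ n ∈ range M, 1 / (1 + x * ζ ^ n) = M / (1 - (-x) ^ M) := by
  have expand : ∀ n : ℕ, (1 + x * ζ ^ n) * (∑ k ∈ range M, (-(x * ζ ^ n)) ^ k)
      = 1 - (-x) ^ M := by
    intro n
    have hg := geom_sum_mul (-(x * ζ ^ n)) M
    have hpow : (-(x * ζ ^ n)) ^ M = (-x) ^ M := by
      rw [neg_mul_eq_neg_mul, mul_pow, ← pow_mul, mul_comm n M, pow_mul, hζ.pow_eq_one,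
        one_pow, mul_one]
    calc (1 + x * ζ ^ n) * (∑ k ∈ range M, (-(x * ζ ^ n)) ^ k)
        = -((∑ k ∈ range M, (-(x * ζ ^ n)) ^ k) * ((-(x * ζ ^ n)) - 1)) := by ring
      _ = -((-(x * ζ ^ n)) ^ M - 1) := by rw [hg]
      _ = 1 - (-x) ^ M := by rw [hpow]; ring
  have per : ∀ n : ℕ, 1 / (1 + x * ζ ^ n)
      = (∑ k ∈ range M, (-x) ^ k * (ζ ^ k) ^ n) / (1 - (-x) ^ M) := by
    intro n
    rw [div_eq_div_iff (hx n) hD, one_mul, mul_comm, ← expand n]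
    congr 1
    refine Finset.sum_congr rfl fun k _ => ?_
    rw [neg_mul_eq_neg_mul, mul_pow, ← pow_mul, ← pow_mul, mul_comm k n]
  calc ∑ n ∈ range M, 1 / (1 + x * ζ ^ n)
      = ∑ n ∈ range M, (∑ k ∈ range M, (-x) ^ k * (ζ ^ k) ^ n) / (1 - (-x) ^ M) := by
        exact Finset.sum_congr rfl fun n _ => per n
    _ = (∑ k ∈ range M, (-x) ^ k * ∑ n ∈ range M, (ζ ^ k) ^ n) / (1 - (-x) ^ M) := by
        rw [← Finset.sum_div]
        congr 1
        rw [Finset.sum_comm]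
        exact Finset.sum_congr rfl fun k _ => by rw [Finset.mul_sum]
    _ = M / (1 - (-x) ^ M) := by
        congr 1
        rw [Finset.sum_eq_single 0]
        · simp
        · intro k hk hk0
          rw [zsum13 hζ (Finset.mem_range.mp hk)]
          simp [hk0]
        · intro h0
          have hM0 : M = 0 := by simpa using h0
          subst hM0; simp

private lemma sumB13 {M : ℕ} {ζ : ℂ} (hζ : IsPrimitiveRoot ζ M) {x : ℂ} (hx0 : x ≠ 0)
    (hx : ∀ n : ℕ, 1 + x * ζ ^ n ≠ 0) (hD : (1 : ℂ) - (-x) ^ M ≠ 0) :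
    ∑ n ∈ range M, ζ ^ n / (1 + x * ζ ^ n) = ((M : ℂ) - M / (1 - (-x) ^ M)) / x := by
  have per : ∀ n : ℕ, ζ ^ n / (1 + x * ζ ^ n) = (1 - 1 / (1 + x * ζ ^ n)) / x := by
    intro n
    have h := hx n
    have h' : 1 + ζ ^ n * x ≠ 0 := by rwa [mul_comm]
    field_simp
    ring
  rw [Finset.sum_congr rfl fun n _ => per n, ← Finset.sum_div, Finset.sum_sub_distrib,
    sumA13 hζ hx hD]
  simp

private lemma expcos13 (b : ℝ) : Complex.exp ((b:ℝ)*Complex.I) + Complex.exp ((-b:ℝ)*Complex.I)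
    = 2*(Real.cos b : ℂ) := by
  rw [Complex.exp_mul_I, Complex.exp_mul_I, ← Complex.ofReal_cos, ← Complex.ofReal_sin,
    ← Complex.ofReal_cos, ← Complex.ofReal_sin, Real.cos_neg, Real.sin_neg]
  push_cast; ring

theorem stmt_13 (N : ℕ) (hN : 1 ≤ N) (M : ℕ) (hM : M = 2 * N + 1)
    (c : ℕ → ℝ) (hc : ∀ n, c n = Real.tan (n * π / M) ^ 2)
    (f : ℝ → ℝ)
    (hf : ∀ X : ℝ, f X = 1 + (2 / M) * ∑ n ∈ Finset.Icc 1 N,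
      c n * X / (1 + c n + X)) :
    ∀ X : ℝ, 0 ≤ X → f X ≤ Real.sqrt (1 + X) := by
  intro X hX
  rcases eq_or_lt_of_le hX with h0 | hXpos
  · rw [hf, ← h0]
    simp
  -- basic positivity facts
  have hM0 : M ≠ 0 := by omega
  have hMR : (0:ℝ) < M := by exact_mod_cast Nat.pos_of_ne_zero hM0
  have hcn0 : ∀ n, 0 ≤ c n := fun n => by rw [hc]; positivity
  have hdenpos : ∀ n, (0:ℝ) < 1 + c n + X := fun n => by have := hcn0 n; linarith
  set s := Real.sqrt (1+X) with hsdef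
  have hss : s^2 = 1 + X := Real.sq_sqrt (by linarith)
  have hsnn : 0 ≤ s := Real.sqrt_nonneg _
  have hs1 : 1 < s := by nlinarith [hss, hsnn]
  set ρ := (s-1)/(s+1) with hρdef
  have hρ : ρ * (s+1) = s - 1 := div_mul_cancel₀ _ (by linarith)
  have hρ0 : 0 < ρ := div_pos (by linarith) (by linarith)
  have hρ1 : ρ < 1 := by rw [hρdef, div_lt_one (by linarith)]; linarith
  have hρM0 : 0 < ρ^M := pow_pos hρ0 M
  have hρM1 : ρ^M < 1 := pow_lt_one₀ (le_of_lt hρ0) hρ1 hM0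
  -- cos facts
  have hcos_ne : ∀ n : ℕ, Real.cos (n * π / M) ≠ 0 := by
    intro n h
    rw [Real.cos_eq_zero_iff] at h
    obtain ⟨k, hk⟩ := h
    have hπ : π ≠ 0 := Real.pi_ne_zero
    have hMne : (M:ℝ) ≠ 0 := by positivity
    have h2 : (2 * n : ℝ) = (2*k+1) * M := by
      field_simp at hk
      linear_combination hk
    have h3 : (2 * (n:ℤ)) = (2*k+1) * M := by exact_mod_cast h2
    have h4 : (2 * (n:ℤ)) = 2*(2*k*N + k + N) + 1 := by
      rw [h3, hM]; push_cast; ring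
    omega
  have h1c : ∀ n : ℕ, (1 + c n) * (Real.cos (n * π / M))^2 = 1 := by
    intro n
    have ht : Real.tan (n * π / M) * Real.cos (n * π / M) = Real.sin (n * π / M) :=
      Real.tan_mul_cos (hcos_ne n)
    have hsc := Real.sin_sq_add_cos_sq (n * π / M : ℝ)
    rw [hc]
    linear_combination (Real.tan (n * π / M) * Real.cos (n * π / M)
      + Real.sin (n * π / M)) * ht + hsc
  -- the roots of unity
  set ζ : ℂ := Complex.exp (2*π*Complex.I/M) with hζdef
  have hζ : IsPrimitiveRoot ζ M := Complex.isPrimitiveRoot_exp M hM0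
  have hζn : ∀ n : ℕ, ζ ^ n = Complex.exp ((2*π*n/M : ℝ)*Complex.I) := by
    intro n
    rw [← Complex.exp_nat_mul]
    congr 1
    push_cast
    ring
  have habs : ∀ n : ℕ, ‖ζ^n‖ = 1 := fun n => by
    rw [hζn]; exact Complex.norm_exp_ofReal_mul_I _
  have hden1 : ∀ n : ℕ, 1 + (ρ:ℂ) * ζ^n ≠ 0 := by
    intro n h
    have h1 : (ρ:ℂ)*ζ^n = -1 := by linear_combination h
    have h2 : ‖(ρ:ℂ)*ζ^n‖ = 1 := by rw [h1]; simp
    rw [norm_mul, habs n, mul_one, Complex.norm_real, Real.norm_eq_abs, abs_of_pos hρ0] at h2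
    linarith
  have hden2 : ∀ n : ℕ, ζ^n + (ρ:ℂ) ≠ 0 := by
    intro n h
    have h1 : ζ^n = -(ρ:ℂ) := by linear_combination h
    have h2 := habs n
    rw [h1, norm_neg, Complex.norm_real, Real.norm_eq_abs, abs_of_pos hρ0] at h2
    linarith
  -- bridge: ζ^n * ζ^n + 1 = ζ^n * (2 cos² - 1) * 2
  have hbridge : ∀ n : ℕ, ζ^n * ζ^n + 1
      = ζ^n * (2*(Real.cos (n * π / M) : ℂ)^2 - 1) * 2 := by
    intro n
    set a : ℝ := n * π / M with ha
    have hz : ζ^n = Complex.exp ((2*a:ℝ)*Complex.I) := by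
      rw [hζn]; congr 2; rw [ha]; ring
    have hcos2 : Real.cos (2*a) = 2*(Real.cos a)^2 - 1 := Real.cos_two_mul _
    have zinv : ζ^n * Complex.exp ((-(2*a):ℝ)*Complex.I) = 1 := by
      rw [hz, ← Complex.exp_add]
      norm_num [Complex.exp_zero]
    calc ζ^n * ζ^n + 1 = ζ^n*(ζ^n + Complex.exp ((-(2*a):ℝ)*Complex.I)) := by
          linear_combination -zinv
      _ = ζ^n * (2*(Real.cos (2*a):ℂ)) := by rw [hz, expcos13 (2*a)]
      _ = ζ^n * (2*(Real.cos a:ℂ)^2 - 1) * 2 := by rw [hcos2]; push_cast; ring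
  -- denominator product
  have hprod : ∀ n : ℕ, (1 + (ρ:ℂ)*ζ^n)*(ζ^n + ρ)
      = ((1-(ρ:ℂ))^2 + 4*(ρ:ℂ)*(Real.cos (n * π / M) : ℂ)^2) * ζ^n := by
    intro n
    linear_combination (ρ:ℂ) * hbridge n
  have hDpos : ∀ n : ℕ, (0:ℝ) < (1-ρ)^2 + 4*ρ*(Real.cos (n * π / M))^2 := by
    intro n
    have h1 : (0:ℝ) < (1-ρ)^2 := pow_pos (by linarith) 2
    nlinarith [sq_nonneg (Real.cos (n * π / M))]
  -- per-n key identity, real then complex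
  have key_real : ∀ n : ℕ, 1 + c n * X / (1 + c n + X)
      = s * (1-ρ^2) / ((1-ρ)^2 + 4*ρ*(Real.cos (n * π / M))^2) := by
    intro n
    have h1 := (hdenpos n).ne'
    have h2 := (hDpos n).ne'
    clear_value ρ s
    rw [add_div' _ _ _ h1, div_eq_div_iff h1 h2]
    linear_combination (4*ρ*(1+X))*h1c n + (s*(s+c n)*ρ + s*(s-c n))*hρ
      + (s*(1-ρ^2) - (1+c n)*(1-ρ)^2 - 4*ρ)*hss
  have key : ∀ n : ℕ, ((1 + c n * X / (1 + c n + X) : ℝ) : ℂ)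
      = ((s*(1-ρ^2) : ℝ):ℂ) * ζ^n / ((1 + (ρ:ℂ)*ζ^n)*(ζ^n + ρ)) := by
    intro n
    rw [hprod n]
    have hz0 : ζ^n ≠ 0 := by
      intro h; have := habs n; rw [h] at this; simp at this
    rw [mul_comm ((1-(ρ:ℂ))^2 + 4*(ρ:ℂ)*(Real.cos (n * π / M) : ℂ)^2) (ζ^n),
      mul_comm (((s*(1-ρ^2) : ℝ)):ℂ) (ζ^n), mul_div_mul_left _ _ hz0]
    rw [show ((1 + c n * X / (1 + c n + X) : ℝ) : ℂ)
        = ((s * (1-ρ^2) / ((1-ρ)^2 + 4*ρ*(Real.cos (n * π / M))^2) : ℝ) : ℂ)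
      from congrArg _ (key_real n)]
    push_cast
    ring
  -- partial fractions and summation
  set ζ' : ℂ := ζ^(M-1) with hζ'def
  have hζζ' : ζ' * ζ = 1 := by
    rw [hζ'def, ← pow_succ, Nat.sub_add_cancel (by omega), hζ.pow_eq_one]
  have hζ'prim : IsPrimitiveRoot ζ' M := by
    have h : ζ' = ζ⁻¹ := eq_inv_of_mul_eq_one_left hζζ'
    rw [h]; exact hζ.inv
  have hζ'pow : ∀ n : ℕ, ζ'^n = ζ^((M-1)*n) := fun n => by rw [hζ'def, pow_mul]
  have hden1' : ∀ n : ℕ, 1 + (ρ:ℂ) * ζ'^n ≠ 0 := fun n => by rw [hζ'pow]; exact hden1 _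
  have hmul : ∀ n : ℕ, ζ'^n * ζ^n = 1 := fun n => by rw [← mul_pow, hζζ', one_pow]
  have hfrac : ∀ n : ℕ, (1:ℂ)/(ζ^n + ρ) = ζ'^n/(1 + (ρ:ℂ)*ζ'^n) := by
    intro n
    rw [div_eq_div_iff (hden2 n) (hden1' n)]
    linear_combination -(hmul n)
  have step2 : ∀ n : ℕ, ((s*(1-ρ^2) : ℝ):ℂ) * ζ^n / ((1 + (ρ:ℂ)*ζ^n)*(ζ^n + ρ))
      = (s:ℂ) * (1/(1 + (ρ:ℂ)*ζ^n)) - ((s:ℂ)*(ρ:ℂ)) * (ζ'^n/(1 + (ρ:ℂ)*ζ'^n)) := by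
    intro n
    rw [← hfrac n]
    have h1 := hden1 n
    have h2 := hden2 n
    push_cast
    field_simp
    ring
  have hodd : Odd M := by rw [hM]; exact ⟨N, by ring⟩
  have hnegpow : (1:ℂ) - (-(ρ:ℂ))^M = 1 + (ρ:ℂ)^M := by
    rw [hodd.neg_pow]; ring
  have h1ρM : (0:ℝ) < 1 + ρ^M := by linarith
  have hDM : (1:ℂ) - (-(ρ:ℂ))^M ≠ 0 := by
    rw [hnegpow]
    intro h
    have h2 : ((1 + ρ^M : ℝ):ℂ) = 0 := by push_cast; linear_combination h
    have h3 := Complex.ofReal_eq_zero.mp h2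
    linarith
  have hρC0 : (ρ:ℂ) ≠ 0 := Complex.ofReal_ne_zero.mpr (ne_of_gt hρ0)
  have hsumA := sumA13 hζ hden1 hDM
  have hsumB := sumB13 hζ'prim hρC0 hden1' hDM
  have hS : ∑ n ∈ range M, ((1 + c n * X / (1 + c n + X) : ℝ) : ℂ)
      = ((M*s*(1-ρ^M)/(1+ρ^M) : ℝ) : ℂ) := by
    calc ∑ n ∈ range M, ((1 + c n * X / (1 + c n + X) : ℝ) : ℂ)
        = ∑ n ∈ range M, ((s:ℂ) * (1/(1 + (ρ:ℂ)*ζ^n))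
            - ((s:ℂ)*(ρ:ℂ)) * (ζ'^n/(1 + (ρ:ℂ)*ζ'^n))) := by
          refine Finset.sum_congr rfl fun n _ => ?_
          rw [key n, step2 n]
      _ = (s:ℂ) * (∑ n ∈ range M, 1/(1 + (ρ:ℂ)*ζ^n))
            - ((s:ℂ)*(ρ:ℂ)) * (∑ n ∈ range M, ζ'^n/(1 + (ρ:ℂ)*ζ'^n)) := by
          rw [Finset.sum_sub_distrib, Finset.mul_sum, Finset.mul_sum]
      _ = ((M*s*(1-ρ^M)/(1+ρ^M) : ℝ) : ℂ) := by
          rw [hsumA, hsumB, hnegpow]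
          have hne : (1:ℂ) + (ρ:ℂ)^M ≠ 0 := by rw [← hnegpow]; exact hDM
          push_cast
          field_simp
          ring
  have hRS : ∑ n ∈ range M, (1 + c n * X / (1 + c n + X)) = M*s*(1-ρ^M)/(1+ρ^M) := by
    have h := hS
    rw [← Complex.ofReal_sum] at h
    exact_mod_cast h
  -- symmetry of c
  have hcsym : ∀ a : ℕ, a ≤ 2*N → c (M - a) = c a := by
    intro a ha
    rw [hc, hc]
    have hcast : ((M - a : ℕ) : ℝ) = (M : ℝ) - a := by
      rw [Nat.cast_sub (by omega : a ≤ M)]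
    rw [hcast]
    have hang : ((M:ℝ) - a) * π / M = π - (a * π / M) := by
      field_simp
    rw [hang, Real.tan_eq_sin_div_cos, Real.tan_eq_sin_div_cos, Real.sin_pi_sub,
      Real.cos_pi_sub, div_neg]
    ring
  -- splitting the sum
  have hrefl : ∑ n ∈ Finset.Ioc N (2*N), (1 + c n * X / (1 + c n + X))
      = ∑ n ∈ Finset.Ioc 0 N, (1 + c n * X / (1 + c n + X)) := by
    refine Finset.sum_nbij' (fun n => M - n) (fun n => M - n) ?_ ?_ ?_ ?_ ?_
    · intro a ha; simp only [Finset.mem_Ioc] at ha ⊢; omega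
    · intro a ha; simp only [Finset.mem_Ioc] at ha ⊢; omega
    · intro a ha; simp only [Finset.mem_Ioc] at ha; show M - (M - a) = a; omega
    · intro a ha; simp only [Finset.mem_Ioc] at ha; show M - (M - a) = a; omega
    · intro a ha
      simp only [Finset.mem_Ioc] at ha
      rw [hcsym a (by omega)]
  have hc0 : c 0 = 0 := by rw [hc]; norm_num
  have hsplit : ∑ n ∈ range M, (1 + c n * X / (1 + c n + X))
      = 1 + (∑ n ∈ Finset.Ioc 0 N, (1 + c n * X / (1 + c n + X))
        + ∑ n ∈ Finset.Ioc N (2*N), (1 + c n * X / (1 + c n + X))) := by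
    have h1 : range M = insert 0 (Finset.Ioc 0 (2*N)) := by
      ext k; simp only [Finset.mem_range, Finset.mem_insert, Finset.mem_Ioc, hM]; omega
    rw [h1, Finset.sum_insert (by simp), hc0,
      Finset.sum_Ioc_consecutive _ (Nat.zero_le N) (by omega : N ≤ 2*N)]
    norm_num
  have hsum1 : ∑ n ∈ Finset.Ioc 0 N, (1 + c n * X / (1 + c n + X))
      = (M*s*(1-ρ^M)/(1+ρ^M) - 1)/2 := by
    have h := hRS
    rw [hsplit, hrefl] at h
    linarith
  have hIcc : Finset.Icc 1 N = Finset.Ioc 0 N := by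
    ext k; simp only [Finset.mem_Icc, Finset.mem_Ioc]; omega
  have hsum2 : ∑ n ∈ Finset.Icc 1 N, c n * X / (1 + c n + X)
      = (M*s*(1-ρ^M)/(1+ρ^M) - 1)/2 - N := by
    rw [hIcc]
    have h : ∀ n ∈ Finset.Ioc 0 N, c n * X / (1 + c n + X)
        = (1 + c n * X / (1 + c n + X)) - 1 := fun n _ => by ring
    rw [Finset.sum_congr rfl h, Finset.sum_sub_distrib, hsum1]
    simp [Nat.card_Ioc]
  rw [hf X, hsum2]
  have hMcast : (M:ℝ) = 2*N+1 := by rw [hM]; push_cast; ring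
  have heq : 1 + 2/(M:ℝ) * ((M*s*(1-ρ^M)/(1+ρ^M) - 1)/2 - N) = s*((1-ρ^M)/(1+ρ^M)) := by
    clear_value ρ s
    have hne1 : (1 + ρ^M) ≠ 0 := h1ρM.ne'
    have hne2 : (2*(N:ℝ)+1) ≠ 0 := by positivity
    rw [hMcast]
    field_simp
    ring
  rw [heq]
  have hQ : (1-ρ^M)/(1+ρ^M) ≤ 1 := by
    rw [div_le_one h1ρM]; linarith
  calc s*((1-ρ^M)/(1+ρ^M)) ≤ s*1 := by
        apply mul_le_mul_of_nonneg_left hQ (by linarith)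
    _ = Real.sqrt (1+X) := by rw [mul_one]
end
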